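/- If a morphism h in a triangulated category C with a weight structure w factors through an object M that is without weights m,...,n, then h kills weights m,...,n. -/

import Mathlib

open CategoryTheory CategoryTheory.Limits CategoryTheory.Pretriangulated Opposite

universe v u

variable (C : Type u) [Category.{v} C] [Preadditive C] [HasZeroObject C]
  [HasShift C ℤ] [∀ n : ℤ, (shiftFunctor C n).Additive] [Pretriangulated C]

/-- A weight structure on the triangulated category `C`. -/
structure WeightStructure where
  /-- the class `C_{w ≤ n}` -/
  le : ℤ → Set C
  /-- the class `C_{w ≥ n}` -/
  ge : ℤ → Set C
  le_iso_closed : ∀ (n : ℤ) (X Y : C), (X ≅ Y) → X ∈ le n → Y ∈ le n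
  ge_iso_closed : ∀ (n : ℤ) (X Y : C), (X ≅ Y) → X ∈ ge n → Y ∈ ge n
  le_retract : ∀ (n : ℤ) (X Y : C) (a : X ⟶ Y) (b : Y ⟶ X),
    a ≫ b = 𝟙 X → Y ∈ le n → X ∈ le n
  ge_retract : ∀ (n : ℤ) (X Y : C) (a : X ⟶ Y) (b : Y ⟶ X),
    a ≫ b = 𝟙 X → Y ∈ ge n → X ∈ ge n
  le_shift : ∀ (n k : ℤ) (X : C), X ∈ le n → X⟦k⟧ ∈ le (n + k)
  ge_shift : ∀ (n k : ℤ) (X : C), X ∈ ge n → X⟦k⟧ ∈ ge (n + k)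
  le_mono : ∀ n : ℤ, le n ⊆ le (n + 1)
  ge_anti : ∀ n : ℤ, ge (n + 1) ⊆ ge n
  orth : ∀ (n : ℤ) (X Y : C), X ∈ le n → Y ∈ ge (n + 1) → ∀ f : X ⟶ Y, f = 0
  decomp : ∀ (X : C) (k : ℤ), ∃ (A B : C) (x : A ⟶ X) (y : X ⟶ B) (δ : B ⟶ A⟦(1 : ℤ)⟧),
    (Triangle.mk x y δ ∈ distTriang C) ∧ A ∈ le k ∧ B ∈ ge (k + 1)

variable {C}

/-- `(A, B, x, y)` is a `k`-weight decomposition of `X`. -/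
def WeightStructure.IsWeightDecomp (w : WeightStructure C) (k : ℤ) {X : C} (A B : C)
    (x : A ⟶ X) (y : X ⟶ B) : Prop :=
  (∃ δ : B ⟶ A⟦(1 : ℤ)⟧, Triangle.mk x y δ ∈ distTriang C) ∧ A ∈ w.le k ∧ B ∈ w.ge (k + 1)

/-- `g : M ⟶ N` kills weights `m, …, n`. -/
def WeightStructure.KillsWeights (w : WeightStructure C) (m n : ℤ) {M N : C}
    (g : M ⟶ N) : Prop :=
  ∃ (A A' B B' : C) (x : A ⟶ M) (x' : M ⟶ A') (y' : B ⟶ N) (y : N ⟶ B'),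
    w.IsWeightDecomp n A A' x x' ∧ w.IsWeightDecomp (m - 1) B B' y' y ∧
      x ≫ g ≫ y = 0

/-- The class of objects of `C` without weights `m, …, n`. -/
def WeightStructure.without (w : WeightStructure C) (m n : ℤ) : Set C :=
  {M : C | w.KillsWeights m n (𝟙 M)}



/-- If `h` factors through an object `M` without weights `m, …, n`, then `h`
kills weights `m, …, n`. -/
theorem stmt0 (w : WeightStructure C) (m n : ℤ) (hmn : m ≤ n) {X Y M : C}
    (h : X ⟶ Y) (hM : M ∈ w.without m n) (a : X ⟶ M) (b : M ⟶ Y)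
    (hfac : a ≫ b = h) : w.KillsWeights m n h := by
  obtain ⟨AM, AM', BM, BM', xM, xM', yM', yM, hdX, hdY, hz⟩ := hM
  obtain ⟨A, A', x, x', δ, hTX, hA, hA'⟩ := w.decomp X n
  obtain ⟨B, B', y', y, δ', hTY, hB, hB'⟩ := w.decomp Y (m - 1)
  refine ⟨A, A', B, B', x, x', y', y, ⟨⟨δ, hTX⟩, hA, hA'⟩, ⟨⟨δ', hTY⟩, hB, hB'⟩, ?_⟩
  simp only [Category.id_comp] at hz
  obtain ⟨δM, hTM⟩ := hdX.1
  obtain ⟨δM', hTM'⟩ := hdY.1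
  -- (x ≫ a) ≫ xM' = 0 by orthogonality
  have h1 : (x ≫ a) ≫ xM' = 0 := w.orth n A AM' hA hdX.2.2 _
  obtain ⟨t, ht⟩ := Triangle.coyoneda_exact₂ _ hTM (x ≫ a) h1
  -- xM ≫ yM = 0, so xM factors through yM'
  obtain ⟨s, hs⟩ := Triangle.coyoneda_exact₂ _ hTM' xM hz
  obtain ⟨t, ht, s, hs⟩ : ∃ t : A ⟶ AM, x ≫ a = t ≫ xM ∧ ∃ s : AM ⟶ BM, xM = s ≫ yM' := ⟨t, ht, s, hs⟩
  have h2 : yM' ≫ b ≫ y = 0 := w.orth (m - 1) BM B' hdY.2.1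
    (by simpa using hB') _
  rw [← hfac]
  calc x ≫ (a ≫ b) ≫ y = (x ≫ a) ≫ b ≫ y := by simp
    _ = (t ≫ xM) ≫ b ≫ y := by rw [← ht]
    _ = t ≫ s ≫ yM' ≫ b ≫ y := by rw [hs]; simp
    _ = 0 := by rw [h2]; simp
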